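/- The polynomial X⁸ + 14X⁴ + 1 has 8 distinct roots in ℂ, and its root set is {±α, ±iα, ±1/α, ±i/α} where α is a root of X² - (i+1)X - i; in particular the root set is invariant under x ↦ ix and x ↦ 1/x. -/

import Mathlib

open Complex

-- α^8 + 14 α^4 + 1 = 0 from the quadratic relation
lemma oct_root (α : ℂ) (hα : α ^ 2 = (I + 1) * α + I) :
    α ^ 8 + 14 * α ^ 4 + 1 = 0 := by
  linear_combination (15 + 53*I + 55*I^2 + 63*I^3 + 41*I^4 + 11*I^5 + I^6
      + (15 + 23*I + 25*I^2 + 25*I^3 + 9*I^4 + I^5) * α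
      + (15 + 7*I + 13*I^2 + 7*I^3 + I^4) * α^2
      + (1 + 5*I + 5*I^2 + I^3) * α^3
      + (1 + 3*I + I^2) * α^4
      + (1 + I) * α^5 + α^6) * hα
    + ((1 + 15*I + 52*I^2 + 40*I^3 + 11*I^4 + I^5)
      + (15 + 83*I + 116*I^2 + 60*I^3 + 13*I^4 + I^5) * α) * Complex.I_sq

lemma alpha_ne_zero (α : ℂ) (hα : α ^ 2 = (I + 1) * α + I) : α ≠ 0 := by
  intro h
  rw [h] at hα
  simp only [ne_eq, zero_pow, mul_zero, zero_add] at hα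
  exact Complex.I_ne_zero (by linear_combination -hα)

lemma same_case (α ε₁ ε₂ : ℂ) (hα0 : α ≠ 0) (hne : ε₁ ≠ ε₂) (h : ε₁ * α = ε₂ * α) :
    False := hne (mul_right_cancel₀ hα0 h)

lemma cross_case (α ε₁ ε₂ : ℂ) (h8 : α ^ 8 + 14 * α ^ 4 + 1 = 0) (hα0 : α ≠ 0)
    (hε1 : ε₁ ^ 4 = 1) (hε2 : ε₂ ^ 4 = 1) (h : ε₁ * α = ε₂ * α⁻¹) : False := by
  have hc : ε₁ * α ^ 2 = ε₂ := by
    have := congrArg (· * α) h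
    field_simp at this
    linear_combination this
  have h81 : α ^ 8 = 1 := by
    linear_combination (ε₁^3*α^6 + ε₁^2*α^4*ε₂ + ε₁*α^2*ε₂^2 + ε₂^3) * hc
      + (-α^8) * hε1 + hε2
  have h4 : α ^ 4 = -1/7 := by linear_combination (h8 - h81) / 14
  have : (1:ℂ) = 1/49 := by linear_combination (α^4 - 1/7) * h4 - h81
  norm_num at this

lemma I4 : Complex.I ^ 4 = 1 := by
  linear_combination (Complex.I^2 - 1) * Complex.I_sq

lemma roots_eq (α : ℂ) (hα : α ^ 2 = (I + 1) * α + I) :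
    {x : ℂ | x ^ 8 + 14 * x ^ 4 + 1 = 0} =
      ({α, -α, I * α, -(I * α), α⁻¹, -α⁻¹, I * α⁻¹, -(I * α⁻¹)} : Set ℂ) := by
  have h8 := oct_root α hα
  have hα0 := alpha_ne_zero α hα
  ext x
  simp only [Set.mem_setOf_eq, Set.mem_insert_iff, Set.mem_singleton_iff]
  constructor
  · intro hx
    have key : (x ^ 4 - α ^ 4) * (x ^ 4 * α ^ 4 - 1) = 0 := by
      linear_combination α ^ 4 * hx + (-x^4) * h8
    rcases mul_eq_zero.mp key with hA | hB
    · have : (x - α) * (x + α) * (x - I * α) * (x + I * α) = 0 := by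
        linear_combination hA + (α^4 - α^2*x^2) * Complex.I_sq
      rcases mul_eq_zero.mp this with h' | h'
      · rcases mul_eq_zero.mp h' with h'' | h''
        · rcases mul_eq_zero.mp h'' with h3 | h3
          · exact Or.inl (sub_eq_zero.mp h3)
          · exact Or.inr (Or.inl (by linear_combination h3))
        · exact Or.inr (Or.inr (Or.inl (sub_eq_zero.mp h'')))
      · exact Or.inr (Or.inr (Or.inr (Or.inl (by linear_combination h'))))
    · have : (x * α - 1) * (x * α + 1) * (x * α - I) * (x * α + I) = 0 := by
        linear_combination hB + (1 - x^2*α^2) * Complex.I_sq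
      rcases mul_eq_zero.mp this with h' | h'
      · rcases mul_eq_zero.mp h' with h'' | h''
        · rcases mul_eq_zero.mp h'' with h3 | h3
          · refine Or.inr (Or.inr (Or.inr (Or.inr (Or.inl ?_))))
            field_simp
            linear_combination h3
          · refine Or.inr (Or.inr (Or.inr (Or.inr (Or.inr (Or.inl ?_)))))
            field_simp
            linear_combination h3
        · refine Or.inr (Or.inr (Or.inr (Or.inr (Or.inr (Or.inr (Or.inl ?_))))))
          field_simp
          linear_combination h''
      · refine Or.inr (Or.inr (Or.inr (Or.inr (Or.inr (Or.inr (Or.inr ?_))))))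
        field_simp
        linear_combination h'
  · intro hx
    rcases hx with rfl | rfl | rfl | rfl | rfl | rfl | rfl | rfl
    · exact h8
    · linear_combination h8
    · linear_combination h8 + (α^8*(I^6 - I^4 + I^2 - 1) + 14*α^4*(I^2 - 1)) * Complex.I_sq
    · linear_combination h8 + (α^8*(I^6 - I^4 + I^2 - 1) + 14*α^4*(I^2 - 1)) * Complex.I_sq
    · field_simp
      linear_combination h8
    · field_simp
      linear_combination h8
    · field_simp
      linear_combination h8 + ((I^6 - I^4 + I^2 - 1) + 14*α^4*(I^2-1)) * Complex.I_sq
    · field_simp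
      linear_combination h8 + ((I^6 - I^4 + I^2 - 1) + 14*α^4*(I^2-1)) * Complex.I_sq
lemma card_eight (α : ℂ) (hα : α ^ 2 = (I + 1) * α + I) :
    ({α, -α, I * α, -(I * α), α⁻¹, -α⁻¹, I * α⁻¹, -(I * α⁻¹)} : Set ℂ).ncard = 8 := by
  have h8 := oct_root α hα
  have hα0 := alpha_ne_zero α hα
  have hn0 : (α) ∉ ({-α, I * α, -(I * α), α⁻¹, -α⁻¹, I * α⁻¹, -(I * α⁻¹)} : Set ℂ) := by
    simp only [Set.mem_insert_iff, Set.mem_singleton_iff]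
    push_neg
    exact ⟨fun h => same_case α (1) (-1) hα0 (by norm_num [Complex.ext_iff]) (by linear_combination h),
      fun h => same_case α (1) (I) hα0 (by norm_num [Complex.ext_iff]) (by linear_combination h),
      fun h => same_case α (1) (-I) hα0 (by norm_num [Complex.ext_iff]) (by linear_combination h),
      fun h => cross_case α (1) (1) h8 hα0 (by norm_num : (1:ℂ)^4 = 1) (by norm_num : (1:ℂ)^4 = 1) (by linear_combination h),
      fun h => cross_case α (1) (-1) h8 hα0 (by norm_num : (1:ℂ)^4 = 1) (by norm_num : (-1:ℂ)^4 = 1) (by linear_combination h),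
      fun h => cross_case α (1) (I) h8 hα0 (by norm_num : (1:ℂ)^4 = 1) I4 (by linear_combination h),
      fun h => cross_case α (1) (-I) h8 hα0 (by norm_num : (1:ℂ)^4 = 1) (by linear_combination (I^2-1)*Complex.I_sq : (-I:ℂ)^4 = 1) (by linear_combination h)⟩
  have hn1 : (-α) ∉ ({I * α, -(I * α), α⁻¹, -α⁻¹, I * α⁻¹, -(I * α⁻¹)} : Set ℂ) := by
    simp only [Set.mem_insert_iff, Set.mem_singleton_iff]
    push_neg
    exact ⟨fun h => same_case α (-1) (I) hα0 (by norm_num [Complex.ext_iff]) (by linear_combination h),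
      fun h => same_case α (-1) (-I) hα0 (by norm_num [Complex.ext_iff]) (by linear_combination h),
      fun h => cross_case α (-1) (1) h8 hα0 (by norm_num : (-1:ℂ)^4 = 1) (by norm_num : (1:ℂ)^4 = 1) (by linear_combination h),
      fun h => cross_case α (-1) (-1) h8 hα0 (by norm_num : (-1:ℂ)^4 = 1) (by norm_num : (-1:ℂ)^4 = 1) (by linear_combination h),
      fun h => cross_case α (-1) (I) h8 hα0 (by norm_num : (-1:ℂ)^4 = 1) I4 (by linear_combination h),
      fun h => cross_case α (-1) (-I) h8 hα0 (by norm_num : (-1:ℂ)^4 = 1) (by linear_combination (I^2-1)*Complex.I_sq : (-I:ℂ)^4 = 1) (by linear_combination h)⟩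
  have hn2 : (I * α) ∉ ({-(I * α), α⁻¹, -α⁻¹, I * α⁻¹, -(I * α⁻¹)} : Set ℂ) := by
    simp only [Set.mem_insert_iff, Set.mem_singleton_iff]
    push_neg
    exact ⟨fun h => same_case α (I) (-I) hα0 (by norm_num [Complex.ext_iff]) (by linear_combination h),
      fun h => cross_case α (I) (1) h8 hα0 I4 (by norm_num : (1:ℂ)^4 = 1) (by linear_combination h),
      fun h => cross_case α (I) (-1) h8 hα0 I4 (by norm_num : (-1:ℂ)^4 = 1) (by linear_combination h),
      fun h => cross_case α (I) (I) h8 hα0 I4 I4 (by linear_combination h),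
      fun h => cross_case α (I) (-I) h8 hα0 I4 (by linear_combination (I^2-1)*Complex.I_sq : (-I:ℂ)^4 = 1) (by linear_combination h)⟩
  have hn3 : (-(I * α)) ∉ ({α⁻¹, -α⁻¹, I * α⁻¹, -(I * α⁻¹)} : Set ℂ) := by
    simp only [Set.mem_insert_iff, Set.mem_singleton_iff]
    push_neg
    exact ⟨fun h => cross_case α (-I) (1) h8 hα0 (by linear_combination (I^2-1)*Complex.I_sq : (-I:ℂ)^4 = 1) (by norm_num : (1:ℂ)^4 = 1) (by linear_combination h),
      fun h => cross_case α (-I) (-1) h8 hα0 (by linear_combination (I^2-1)*Complex.I_sq : (-I:ℂ)^4 = 1) (by norm_num : (-1:ℂ)^4 = 1) (by linear_combination h),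
      fun h => cross_case α (-I) (I) h8 hα0 (by linear_combination (I^2-1)*Complex.I_sq : (-I:ℂ)^4 = 1) I4 (by linear_combination h),
      fun h => cross_case α (-I) (-I) h8 hα0 (by linear_combination (I^2-1)*Complex.I_sq : (-I:ℂ)^4 = 1) (by linear_combination (I^2-1)*Complex.I_sq : (-I:ℂ)^4 = 1) (by linear_combination h)⟩
  have hn4 : (α⁻¹) ∉ ({-α⁻¹, I * α⁻¹, -(I * α⁻¹)} : Set ℂ) := by
    simp only [Set.mem_insert_iff, Set.mem_singleton_iff]
    push_neg
    exact ⟨fun h => same_case α⁻¹ (1) (-1) (inv_ne_zero hα0) (by norm_num [Complex.ext_iff]) (by linear_combination h),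
      fun h => same_case α⁻¹ (1) (I) (inv_ne_zero hα0) (by norm_num [Complex.ext_iff]) (by linear_combination h),
      fun h => same_case α⁻¹ (1) (-I) (inv_ne_zero hα0) (by norm_num [Complex.ext_iff]) (by linear_combination h)⟩
  have hn5 : (-α⁻¹) ∉ ({I * α⁻¹, -(I * α⁻¹)} : Set ℂ) := by
    simp only [Set.mem_insert_iff, Set.mem_singleton_iff]
    push_neg
    exact ⟨fun h => same_case α⁻¹ (-1) (I) (inv_ne_zero hα0) (by norm_num [Complex.ext_iff]) (by linear_combination h),
      fun h => same_case α⁻¹ (-1) (-I) (inv_ne_zero hα0) (by norm_num [Complex.ext_iff]) (by linear_combination h)⟩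
  have hn6 : (I * α⁻¹) ∉ ({-(I * α⁻¹)} : Set ℂ) := by
    simp only [Set.mem_insert_iff, Set.mem_singleton_iff]
    push_neg
    exact fun h => same_case α⁻¹ (I) (-I) (inv_ne_zero hα0) (by norm_num [Complex.ext_iff]) (by linear_combination h)
  rw [Set.ncard_insert_of_notMem hn0 (Set.toFinite _), Set.ncard_insert_of_notMem hn1 (Set.toFinite _), Set.ncard_insert_of_notMem hn2 (Set.toFinite _), Set.ncard_insert_of_notMem hn3 (Set.toFinite _), Set.ncard_insert_of_notMem hn4 (Set.toFinite _), Set.ncard_insert_of_notMem hn5 (Set.toFinite _), Set.ncard_insert_of_notMem hn6 (Set.toFinite _), Set.ncard_singleton]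

lemma sqrt3_sq : ((Real.sqrt 3 : ℝ) : ℂ) ^ 2 = 3 := by
  rw [← Complex.ofReal_pow, Real.sq_sqrt (by norm_num : (0:ℝ) ≤ 3)]
  norm_num

lemma alpha0_spec :
    ((((1 + Real.sqrt 3) / 2 : ℝ) : ℂ) * (1 + I)) ^ 2 =
      (I + 1) * ((((1 + Real.sqrt 3) / 2 : ℝ) : ℂ) * (1 + I)) + I := by
  push_cast
  linear_combination ((1 + I)^2/4) * sqrt3_sq + (1/2 : ℂ) * Complex.I_sq

theorem stmt17 :
    let R : Set ℂ := {x | x ^ 8 + 14 * x ^ 4 + 1 = 0}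
    R.ncard = 8 ∧
    (∀ α : ℂ, α ^ 2 = (Complex.I + 1) * α + Complex.I →
      R = {α, -α, Complex.I * α, -(Complex.I * α),
        α⁻¹, -α⁻¹, Complex.I * α⁻¹, -(Complex.I * α⁻¹)}) ∧
    (fun x => Complex.I * x) '' R = R ∧ (fun x => x⁻¹) '' R = R := by
  intro R
  have hR : R = {x : ℂ | x ^ 8 + 14 * x ^ 4 + 1 = 0} := rfl
  refine ⟨?_, ?_, ?_, ?_⟩
  · rw [hR, roots_eq _ alpha0_spec]
    exact card_eight _ alpha0_spec
  · intro α hα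
    rw [hR]
    exact roots_eq α hα
  · ext y
    constructor
    · rintro ⟨x, hx, rfl⟩
      have hx' : x ^ 8 + 14 * x ^ 4 + 1 = 0 := hx
      show (I * x) ^ 8 + 14 * (I * x) ^ 4 + 1 = 0
      linear_combination hx' + (x^8*(I^6 - I^4 + I^2 - 1) + 14*x^4*(I^2 - 1)) * Complex.I_sq
    · intro hy
      have hy' : y ^ 8 + 14 * y ^ 4 + 1 = 0 := hy
      refine ⟨-(I * y), ?_, ?_⟩
      · show (-(I * y)) ^ 8 + 14 * (-(I * y)) ^ 4 + 1 = 0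
        linear_combination hy' + (y^8*(I^6 - I^4 + I^2 - 1) + 14*y^4*(I^2 - 1)) * Complex.I_sq
      · show I * -(I * y) = y
        linear_combination (-y) * Complex.I_sq
  · ext y
    constructor
    · rintro ⟨x, hx, rfl⟩
      have hx' : x ^ 8 + 14 * x ^ 4 + 1 = 0 := hx
      have hx0 : x ≠ 0 := by rintro rfl; norm_num at hx'
      show x⁻¹ ^ 8 + 14 * x⁻¹ ^ 4 + 1 = 0
      field_simp
      linear_combination hx'
    · intro hy
      have hy' : y ^ 8 + 14 * y ^ 4 + 1 = 0 := hy
      have hy0 : y ≠ 0 := by rintro rfl; norm_num at hy'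
      refine ⟨y⁻¹, ?_, inv_inv y⟩
      show y⁻¹ ^ 8 + 14 * y⁻¹ ^ 4 + 1 = 0
      field_simp
      linear_combination hy'
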